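/- (Proposition 1) Suppose γ_r > 0 and γ_c > 0. Then J(Z) = 0 if and only if there exist real numbers μ_{rc}, for r = 1,…,R and c = 1,…,C, such that Z = Σ_{r=1}^R Σ_{c=1}^C μ_{rc} χ_{A_r} χ_{B_c}^T. -/
import Mathlib


open Matrix BigOperators Finset

/-- The graph on `Fin n` with `i ~ j` iff `i ≠ j` and `w i j > 0` (for symmetric `w`). -/
def graphOf {n : ℕ} (w : Fin n → Fin n → ℝ) : SimpleGraph (Fin n) :=
  SimpleGraph.fromRel (fun i j => 0 < w i j)

/-- The 0/1 indicator vector of a subset. -/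
noncomputable def chi {n : ℕ} (A : Set (Fin n)) : Fin n → ℝ :=
  A.indicator (fun _ => (1 : ℝ))

/-- The BMC smoothing penalty
`J(Z) = (γr/2) ∑_{i<j} w i j ‖Z_{i·} - Z_{j·}‖² + (γc/2) ∑_{i<j} w̃ i j ‖Z_{·i} - Z_{·j}‖²`. -/
noncomputable def Jpen {n p : ℕ} (γr γc : ℝ) (w : Fin n → Fin n → ℝ)
    (wt : Fin p → Fin p → ℝ) (Z : Matrix (Fin n) (Fin p) ℝ) : ℝ :=
  γr / 2 * ∑ i, ∑ j ∈ Finset.Ioi i, w i j * ∑ k, (Z i k - Z j k) ^ 2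
    + γc / 2 * ∑ i, ∑ j ∈ Finset.Ioi i, wt i j * ∑ k, (Z k i - Z k j) ^ 2


private lemma walk_const {V α : Type*} {G : SimpleGraph V} {f : V → α}
    (h : ∀ a b, G.Adj a b → f a = f b) {i j : V} (wlk : G.Walk i j) : f i = f j := by
  induction wlk with
  | nil => rfl
  | cons ha _ ih => exact (h _ _ ha).trans ih

private lemma comp_const {V α : Type*} {G : SimpleGraph V} {f : V → α}
    (h : ∀ a b, G.Adj a b → f a = f b) {i j : V}
    (hij : G.connectedComponentMk i = G.connectedComponentMk j) : f i = f j := by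
  obtain ⟨wlk⟩ := SimpleGraph.ConnectedComponent.exact hij
  exact walk_const h wlk

/-- Proposition 1: for `γr, γc > 0`, `J(Z) = 0` iff
`Z = ∑_{r,c} μ_{rc} χ_{A_r} χ_{B_c}ᵀ` for some scalars `μ_{rc}`. -/
theorem penalty_zero_iff_biclustered {n p R C : ℕ} (γr γc : ℝ)
    (hγr : 0 < γr) (hγc : 0 < γc)
    (w : Fin n → Fin n → ℝ) (wt : Fin p → Fin p → ℝ)
    (hsymm : ∀ i j, w i j = w j i) (hnonneg : ∀ i j, 0 ≤ w i j)
    (hdiag : ∀ i, w i i = 0)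
    (hsymm' : ∀ i j, wt i j = wt j i) (hnonneg' : ∀ i j, 0 ≤ wt i j)
    (hdiag' : ∀ i, wt i i = 0)
    (A : Fin R → Set (Fin n))
    (eA : (graphOf w).ConnectedComponent ≃ Fin R)
    (hA : ∀ r, A r = {v | eA ((graphOf w).connectedComponentMk v) = r})
    (B : Fin C → Set (Fin p))
    (eB : (graphOf wt).ConnectedComponent ≃ Fin C)
    (hB : ∀ c, B c = {v | eB ((graphOf wt).connectedComponentMk v) = c})
    (Z : Matrix (Fin n) (Fin p) ℝ) :
    Jpen γr γc w wt Z = 0 ↔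
      ∃ μ : Fin R → Fin C → ℝ,
        Z = Matrix.of fun i j => ∑ r, ∑ c, μ r c * chi (A r) i * chi (B c) j := by

  have hchiA : ∀ (r : Fin R) (v : Fin n),
      chi (A r) v = if eA ((graphOf w).connectedComponentMk v) = r then 1 else 0 := by
    intro r v
    simp [chi, hA, Set.indicator_apply, Set.mem_setOf_eq]
  have hchiB : ∀ (c : Fin C) (v : Fin p),
      chi (B c) v = if eB ((graphOf wt).connectedComponentMk v) = c then 1 else 0 := by
    intro c v
    simp [chi, hB, Set.indicator_apply, Set.mem_setOf_eq]
  constructor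
  · intro hJ
    -- nonnegativity of the two sums
    have hS1nn : ∀ i ∈ (Finset.univ : Finset (Fin n)),
        0 ≤ ∑ j ∈ Finset.Ioi i, w i j * ∑ k, (Z i k - Z j k) ^ 2 := by
      intro i _
      exact Finset.sum_nonneg fun j _ => mul_nonneg (hnonneg i j)
        (Finset.sum_nonneg fun k _ => sq_nonneg _)
    have hS2nn : ∀ i ∈ (Finset.univ : Finset (Fin p)),
        0 ≤ ∑ j ∈ Finset.Ioi i, wt i j * ∑ k, (Z k i - Z k j) ^ 2 := by
      intro i _
      exact Finset.sum_nonneg fun j _ => mul_nonneg (hnonneg' i j)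
        (Finset.sum_nonneg fun k _ => sq_nonneg _)
    have h1nn : 0 ≤ ∑ i, ∑ j ∈ Finset.Ioi i, w i j * ∑ k, (Z i k - Z j k) ^ 2 :=
      Finset.sum_nonneg hS1nn
    have h2nn : 0 ≤ ∑ i, ∑ j ∈ Finset.Ioi i, wt i j * ∑ k, (Z k i - Z k j) ^ 2 :=
      Finset.sum_nonneg hS2nn
    have hγr2 : (0:ℝ) < γr / 2 := by linarith
    have hγc2 : (0:ℝ) < γc / 2 := by linarith
    have hS1 : ∑ i, ∑ j ∈ Finset.Ioi i, w i j * ∑ k, (Z i k - Z j k) ^ 2 = 0 := by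
      by_contra hne
      have h1pos : 0 < ∑ i, ∑ j ∈ Finset.Ioi i, w i j * ∑ k, (Z i k - Z j k) ^ 2 :=
        lt_of_le_of_ne h1nn (Ne.symm hne)
      have : 0 < Jpen γr γc w wt Z := by
        unfold Jpen
        have := mul_pos hγr2 h1pos
        nlinarith [mul_nonneg hγc2.le h2nn]
      linarith [hJ]
    have hS2 : ∑ i, ∑ j ∈ Finset.Ioi i, wt i j * ∑ k, (Z k i - Z k j) ^ 2 = 0 := by
      by_contra hne
      have h2pos : 0 < ∑ i, ∑ j ∈ Finset.Ioi i, wt i j * ∑ k, (Z k i - Z k j) ^ 2 :=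
        lt_of_le_of_ne h2nn (Ne.symm hne)
      have : 0 < Jpen γr γc w wt Z := by
        unfold Jpen
        have := mul_pos hγc2 h2pos
        nlinarith [mul_nonneg hγr2.le h1nn]
      linarith [hJ]
    -- each term vanishes
    have hterm1 : ∀ i, ∀ j ∈ Finset.Ioi i, w i j * ∑ k, (Z i k - Z j k) ^ 2 = 0 := by
      intro i j hj
      have h := (Finset.sum_eq_zero_iff_of_nonneg hS1nn).mp hS1 i (Finset.mem_univ i)
      exact (Finset.sum_eq_zero_iff_of_nonneg
        (fun j _ => mul_nonneg (hnonneg i j)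
          (Finset.sum_nonneg fun k _ => sq_nonneg _))).mp h j hj
    have hterm2 : ∀ i, ∀ j ∈ Finset.Ioi i, wt i j * ∑ k, (Z k i - Z k j) ^ 2 = 0 := by
      intro i j hj
      have h := (Finset.sum_eq_zero_iff_of_nonneg hS2nn).mp hS2 i (Finset.mem_univ i)
      exact (Finset.sum_eq_zero_iff_of_nonneg
        (fun j _ => mul_nonneg (hnonneg' i j)
          (Finset.sum_nonneg fun k _ => sq_nonneg _))).mp h j hj
    -- rows equal when w positive
    have hrow : ∀ i j, 0 < w i j → ∀ k, Z i k = Z j k := by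
      have key : ∀ i j, i < j → 0 < w i j → ∀ k, Z i k = Z j k := by
        intro i j hij hw k
        have h0 := hterm1 i j (Finset.mem_Ioi.mpr hij)
        have hsum : ∑ k, (Z i k - Z j k) ^ 2 = 0 := by
          rcases mul_eq_zero.mp h0 with h | h
          · exact absurd h (ne_of_gt hw)
          · exact h
        have := (Finset.sum_eq_zero_iff_of_nonneg
          (fun k _ => sq_nonneg (Z i k - Z j k))).mp hsum k (Finset.mem_univ k)
        have := pow_eq_zero_iff (n := 2) (by norm_num) |>.mp this
        linarith [sub_eq_zero.mp this]
      intro i j hw k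
      rcases lt_trichotomy i j with h | h | h
      · exact key i j h hw k
      · subst h; rfl
      · exact (key j i h (by rw [hsymm]; exact hw) k).symm
    have hcol : ∀ i j, 0 < wt i j → ∀ k, Z k i = Z k j := by
      have key : ∀ i j, i < j → 0 < wt i j → ∀ k, Z k i = Z k j := by
        intro i j hij hw k
        have h0 := hterm2 i j (Finset.mem_Ioi.mpr hij)
        have hsum : ∑ k, (Z k i - Z k j) ^ 2 = 0 := by
          rcases mul_eq_zero.mp h0 with h | h
          · exact absurd h (ne_of_gt hw)
          · exact h
        have := (Finset.sum_eq_zero_iff_of_nonneg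
          (fun k _ => sq_nonneg (Z k i - Z k j))).mp hsum k (Finset.mem_univ k)
        have := pow_eq_zero_iff (n := 2) (by norm_num) |>.mp this
        linarith [sub_eq_zero.mp this]
      intro i j hw k
      rcases lt_trichotomy i j with h | h | h
      · exact key i j h hw k
      · subst h; rfl
      · exact (key j i h (by rw [hsymm']; exact hw) k).symm
    -- constancy on connected components
    have hrowc : ∀ {i j : Fin n},
        (graphOf w).connectedComponentMk i = (graphOf w).connectedComponentMk j →
        ∀ k, Z i k = Z j k := by
      intro i j hij
      have := comp_const (G := graphOf w) (f := fun v => Z v)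
        (fun a b hab => by
          rcases (SimpleGraph.fromRel_adj _ a b).mp hab with ⟨_, h | h⟩
          · exact funext (hrow a b h)
          · exact funext (hrow a b (by rw [hsymm]; exact h))) hij
      exact fun k => congrFun this k
    have hcolc : ∀ {i j : Fin p},
        (graphOf wt).connectedComponentMk i = (graphOf wt).connectedComponentMk j →
        ∀ k, Z k i = Z k j := by
      intro i j hij
      have := comp_const (G := graphOf wt) (f := fun v => fun k => Z k v)
        (fun a b hab => by
          rcases (SimpleGraph.fromRel_adj _ a b).mp hab with ⟨_, h | h⟩
          · exact funext (hcol a b h)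
          · exact funext (hcol a b (by rw [hsymm']; exact h))) hij
      exact fun k => congrFun this k
    -- representatives
    set repA : Fin R → Fin n := fun r => ((eA.symm r).exists_rep).choose with hrepAdef
    have hrepA : ∀ r, (graphOf w).connectedComponentMk (repA r) = eA.symm r :=
      fun r => ((eA.symm r).exists_rep).choose_spec
    set repB : Fin C → Fin p := fun c => ((eB.symm c).exists_rep).choose with hrepBdef
    have hrepB : ∀ c, (graphOf wt).connectedComponentMk (repB c) = eB.symm c :=
      fun c => ((eB.symm c).exists_rep).choose_spec
    refine ⟨fun r c => Z (repA r) (repB c), ?_⟩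
    ext i j
    rw [Matrix.of_apply]
    set r₀ := eA ((graphOf w).connectedComponentMk i) with hr₀
    set c₀ := eB ((graphOf wt).connectedComponentMk j) with hc₀
    rw [Fintype.sum_eq_single r₀ (by
      intro r hr
      apply Finset.sum_eq_zero
      intro c _
      rw [hchiA, if_neg (by rw [← hr₀]; exact fun h => hr h.symm)]
      ring)]
    rw [Fintype.sum_eq_single c₀ (by
      intro c hc
      rw [hchiB, if_neg (by rw [← hc₀]; exact fun h => hc h.symm)]
      ring)]
    rw [hchiA, hchiB, if_pos hr₀.symm, if_pos hc₀.symm]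
    have hcompA : (graphOf w).connectedComponentMk (repA r₀)
        = (graphOf w).connectedComponentMk i := by
      rw [hrepA, hr₀, Equiv.symm_apply_apply]
    have hcompB : (graphOf wt).connectedComponentMk (repB c₀)
        = (graphOf wt).connectedComponentMk j := by
      rw [hrepB, hc₀, Equiv.symm_apply_apply]
    have e1 : Z i (repB c₀) = Z (repA r₀) (repB c₀) := (hrowc hcompA (repB c₀)).symm
    have e2 : Z i j = Z i (repB c₀) := (hcolc hcompB i).symm
    rw [e2, e1]; ring
  · rintro ⟨μ, rfl⟩
    -- show each term vanishes
    have hrow : ∀ i j, 0 < w i j → ∀ k,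
        (Matrix.of fun i j => ∑ r, ∑ c, μ r c * chi (A r) i * chi (B c) j) i k
        = (Matrix.of fun i j => ∑ r, ∑ c, μ r c * chi (A r) i * chi (B c) j) j k := by
      intro i j hw k
      have hne : i ≠ j := by
        intro h; subst h; rw [hdiag] at hw; exact lt_irrefl 0 hw
      have hadj : (graphOf w).Adj i j :=
        (SimpleGraph.fromRel_adj _ i j).mpr ⟨hne, Or.inl hw⟩
      have hcc : (graphOf w).connectedComponentMk i = (graphOf w).connectedComponentMk j :=
        SimpleGraph.ConnectedComponent.sound hadj.reachable
      simp only [Matrix.of_apply]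
      apply Finset.sum_congr rfl
      intro r _
      apply Finset.sum_congr rfl
      intro c _
      rw [hchiA, hchiA, hcc]
    have hcol : ∀ i j, 0 < wt i j → ∀ k,
        (Matrix.of fun i j => ∑ r, ∑ c, μ r c * chi (A r) i * chi (B c) j) k i
        = (Matrix.of fun i j => ∑ r, ∑ c, μ r c * chi (A r) i * chi (B c) j) k j := by
      intro i j hw k
      have hne : i ≠ j := by
        intro h; subst h; rw [hdiag'] at hw; exact lt_irrefl 0 hw
      have hadj : (graphOf wt).Adj i j :=
        (SimpleGraph.fromRel_adj _ i j).mpr ⟨hne, Or.inl hw⟩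
      have hcc : (graphOf wt).connectedComponentMk i = (graphOf wt).connectedComponentMk j :=
        SimpleGraph.ConnectedComponent.sound hadj.reachable
      simp only [Matrix.of_apply]
      apply Finset.sum_congr rfl
      intro r _
      apply Finset.sum_congr rfl
      intro c _
      rw [hchiB, hchiB, hcc]
    unfold Jpen
    have h1 : ∀ (i : Fin n), ∀ j ∈ Finset.Ioi i,
        w i j * ∑ k, ((Matrix.of fun i j => ∑ r, ∑ c, μ r c * chi (A r) i * chi (B c) j) i k
          - (Matrix.of fun i j => ∑ r, ∑ c, μ r c * chi (A r) i * chi (B c) j) j k) ^ 2 = 0 := by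
      intro i j _
      rcases (hnonneg i j).eq_or_lt with h | h
      · rw [← h]; ring
      · have : ∀ k, ((Matrix.of fun i j => ∑ r, ∑ c, μ r c * chi (A r) i * chi (B c) j) i k
          - (Matrix.of fun i j => ∑ r, ∑ c, μ r c * chi (A r) i * chi (B c) j) j k) ^ 2 = 0 := by
          intro k; rw [hrow i j h k]; ring
        rw [Finset.sum_congr rfl (fun k _ => this k), Finset.sum_const, smul_zero, mul_zero]
    have h2 : ∀ (i : Fin p), ∀ j ∈ Finset.Ioi i,
        wt i j * ∑ k, ((Matrix.of fun i j => ∑ r, ∑ c, μ r c * chi (A r) i * chi (B c) j) k i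
          - (Matrix.of fun i j => ∑ r, ∑ c, μ r c * chi (A r) i * chi (B c) j) k j) ^ 2 = 0 := by
      intro i j _
      rcases (hnonneg' i j).eq_or_lt with h | h
      · rw [← h]; ring
      · have : ∀ k, ((Matrix.of fun i j => ∑ r, ∑ c, μ r c * chi (A r) i * chi (B c) j) k i
          - (Matrix.of fun i j => ∑ r, ∑ c, μ r c * chi (A r) i * chi (B c) j) k j) ^ 2 = 0 := by
          intro k; rw [hcol i j h k]; ring
        rw [Finset.sum_congr rfl (fun k _ => this k), Finset.sum_const, smul_zero, mul_zero]
    rw [Finset.sum_congr rfl (fun i _ => Finset.sum_eq_zero (h1 i)),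
        Finset.sum_congr rfl (fun i _ => Finset.sum_eq_zero (h2 i))]
    simp
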